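/- There exist six points in the Euclidean plane such that no three of them are collinear and the distance between any two of them is an integer. In particular, the six points (25,0), (−25,0), (7,24), (7,−24), (−7,24), (−7,−24) have this property. -/

import Mathlib

lemma sqrt_nat (x : ℝ) (n : ℕ) (h : x = (n:ℝ)^2) : ∃ m : ℕ, Real.sqrt x = m :=
  ⟨n, by rw [h, Real.sqrt_sq n.cast_nonneg]⟩

lemma notCol (a b c : EuclideanSpace ℝ (Fin 2))
    (h : (b 0 - a 0) * (c 1 - a 1) ≠ (b 1 - a 1) * (c 0 - a 0)) :
    ¬ Collinear ℝ ({a, b, c} : Set (EuclideanSpace ℝ (Fin 2))) := by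
  intro hc
  obtain ⟨v, hv⟩ := (collinear_iff_of_mem (Set.mem_insert a _)).1 hc
  obtain ⟨r, hr⟩ := hv b (by simp)
  obtain ⟨s, hs⟩ := hv c (by simp)
  apply h
  have hb0 : b 0 = r * v 0 + a 0 := by rw [hr]; rfl
  have hb1 : b 1 = r * v 1 + a 1 := by rw [hr]; rfl
  have hc0 : c 0 = s * v 0 + a 0 := by rw [hs]; rfl
  have hc1 : c 1 = s * v 1 + a 1 := by rw [hs]; rfl
  rw [hb0, hb1, hc0, hc1]; ring

set_option linter.unusedTactic false in
theorem stmt_13 :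
    ∃ p : Fin 6 → EuclideanSpace ℝ (Fin 2),
      p 0 = !₂[25, 0] ∧ p 1 = !₂[-25, 0] ∧ p 2 = !₂[7, 24] ∧
      p 3 = !₂[7, -24] ∧ p 4 = !₂[-7, 24] ∧ p 5 = !₂[-7, -24] ∧
      (∀ i j : Fin 6, ∃ n : ℕ, dist (p i) (p j) = n) ∧
      (∀ i j k : Fin 6, i ≠ j → j ≠ k → i ≠ k →
        ¬ Collinear ℝ ({p i, p j, p k} : Set (EuclideanSpace ℝ (Fin 2)))) := by
  refine ⟨![!₂[25,0], !₂[-25,0], !₂[7,24], !₂[7,-24], !₂[-7,24], !₂[-7,-24]],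
    rfl, rfl, rfl, rfl, rfl, rfl, ?_, ?_⟩
  · intro i j
    fin_cases i <;> fin_cases j <;> rw [EuclideanSpace.dist_eq] <;>
      first
        | (refine sqrt_nat _ 0 ?_; norm_num [Fin.sum_univ_two, Real.dist_eq, sq_abs]; done)
        | (refine sqrt_nat _ 14 ?_; norm_num [Fin.sum_univ_two, Real.dist_eq, sq_abs]; done)
        | (refine sqrt_nat _ 30 ?_; norm_num [Fin.sum_univ_two, Real.dist_eq, sq_abs]; done)
        | (refine sqrt_nat _ 40 ?_; norm_num [Fin.sum_univ_two, Real.dist_eq, sq_abs]; done)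
        | (refine sqrt_nat _ 48 ?_; norm_num [Fin.sum_univ_two, Real.dist_eq, sq_abs]; done)
        | (refine sqrt_nat _ 50 ?_; norm_num [Fin.sum_univ_two, Real.dist_eq, sq_abs]; done)
  · intro i j k hij hjk hik
    fin_cases i <;> fin_cases j <;> fin_cases k <;>
      first
        | exact absurd rfl hij
        | exact absurd rfl hjk
        | exact absurd rfl hik
        | (apply notCol; norm_num [Matrix.cons_val_zero, Matrix.cons_val_one, Matrix.head_cons])
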